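/- A function h : Ω × Ω → ℂ on a set Ω is positive semi-definite if and only if there exists a Hilbert space E and a function F : Ω → E such that h(λ, μ) = ⟨F(λ), F(μ)⟩ for all λ, μ ∈ Ω. -/

import Mathlib

open scoped ComplexOrder

/-- A kernel `h : Ω × Ω → ℂ` is positive semi-definite. -/
def IsPSDKernel {Ω : Type*} (h : Ω → Ω → ℂ) : Prop :=
  ∀ (n : ℕ) (s : Fin n → Ω) (c : Fin n → ℂ),
    (0 : ℂ) ≤ ∑ i, ∑ j, h (s i) (s j) * c i * (starRingEnd ℂ) (c j)

lemma psd_diag {Ω : Type*} {h : Ω → Ω → ℂ} (hp : IsPSDKernel h) (a : Ω) :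
    (h a a).im = 0 := by
  have := hp 1 ![a] ![1]
  simp [Fin.sum_univ_one] at this
  rw [Complex.le_def] at this
  simpa using this.2.symm

lemma psd_herm {Ω : Type*} {h : Ω → Ω → ℂ} (hp : IsPSDKernel h) (a b : Ω) :
    (starRingEnd ℂ) (h a b) = h b a := by
  have ha := psd_diag hp a
  have hb := psd_diag hp b
  have h1 := hp 2 ![a, b] ![1, 1]
  have h2 := hp 2 ![a, b] ![1, Complex.I]
  rw [Complex.le_def] at h1 h2
  simp [Fin.sum_univ_two] at h1 h2
  have e1 := h1.2
  have e2 := h2.2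
  apply Complex.ext <;>
    simp only [Complex.add_im, Complex.mul_im, Complex.mul_re, Complex.conj_re, Complex.conj_im,
      Complex.I_re, Complex.I_im, Complex.one_re, Complex.one_im] at e1 e2 ⊢ <;>
    linarith [ha, hb]

noncomputable def kerInner {Ω : Type} (h : Ω → Ω → ℂ) (f g : Ω →₀ ℂ) : ℂ :=
  f.sum fun μ a => g.sum fun l b => h l μ * b * (starRingEnd ℂ) a

lemma kerInner_single {Ω : Type} (h : Ω → Ω → ℂ) (lam mu : Ω) :
    kerInner h (Finsupp.single mu 1) (Finsupp.single lam 1) = h lam mu := by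
  rw [kerInner, Finsupp.sum_single_index (by simp), Finsupp.sum_single_index (by simp)]
  simp

lemma kerInner_add_left {Ω : Type} (h : Ω → Ω → ℂ) (f₁ f₂ g : Ω →₀ ℂ) :
    kerInner h (f₁ + f₂) g = kerInner h f₁ g + kerInner h f₂ g := by
  classical
  rw [kerInner, Finsupp.sum_add_index' (by simp) ?_]
  · rfl
  · intro i b₁ b₂
    simp only [map_add, mul_add, Finsupp.sum_add]

lemma kerInner_smul_left {Ω : Type} (h : Ω → Ω → ℂ) (r : ℂ) (f g : Ω →₀ ℂ) :
    kerInner h (r • f) g = (starRingEnd ℂ) r * kerInner h f g := by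
  rw [kerInner, Finsupp.sum_smul_index' (by simp), kerInner, Finsupp.mul_sum]
  refine Finsupp.sum_congr fun μ _ => ?_
  rw [Finsupp.mul_sum]
  refine Finsupp.sum_congr fun l _ => ?_
  simp only [smul_eq_mul, map_mul]; ring

lemma kerInner_eq_sum {Ω : Type} (h : Ω → Ω → ℂ) (f g : Ω →₀ ℂ) :
    kerInner h f g =
      ∑ μ ∈ f.support, ∑ l ∈ g.support, h l μ * g l * (starRingEnd ℂ) (f μ) := rfl

lemma kerInner_conj_symm {Ω : Type} {h : Ω → Ω → ℂ} (hp : IsPSDKernel h) (f g : Ω →₀ ℂ) :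
    (starRingEnd ℂ) (kerInner h g f) = kerInner h f g := by
  have herm : ∀ a b, (starRingEnd ℂ) (h a b) = h b a := psd_herm hp
  rw [kerInner_eq_sum, kerInner_eq_sum, map_sum, Finset.sum_comm]
  refine Finset.sum_congr rfl fun μ _ => ?_
  rw [map_sum]
  refine Finset.sum_congr rfl fun l _ => ?_
  rw [map_mul, map_mul, herm, RingHomInvPair.comp_apply_eq]
  ring

lemma kerInner_self_nonneg {Ω : Type} {h : Ω → Ω → ℂ} (hp : IsPSDKernel h) (f : Ω →₀ ℂ) :
    (0 : ℂ) ≤ kerInner h f f := by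
  classical
  set s := f.support with hs
  set e := s.equivFin with he
  have sum_eq : ∀ φ : Ω → ℂ, ∑ x ∈ s, φ x = ∑ i : Fin s.card, φ (e.symm i) := by
    intro φ
    rw [← Finset.sum_coe_sort s φ, ← e.symm.sum_comp]
  have key := hp s.card (fun i => (e.symm i : Ω)) (fun i => f (e.symm i))
  rw [kerInner_eq_sum]
  calc (0:ℂ) ≤ _ := key
  _ = ∑ μ ∈ s, ∑ l ∈ s, h l μ * f l * (starRingEnd ℂ) (f μ) := by
      rw [Finset.sum_comm, sum_eq fun μ => ∑ l ∈ s, h l μ * f l * (starRingEnd ℂ) (f μ)]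
      refine Finset.sum_congr rfl fun j _ => ?_
      rw [sum_eq]

noncomputable def kerCore {Ω : Type} {h : Ω → Ω → ℂ} (hp : IsPSDKernel h) :
    PreInnerProductSpace.Core ℂ (Ω →₀ ℂ) where
  inner := kerInner h
  conj_inner_symm f g := kerInner_conj_symm hp f g
  re_inner_nonneg f := by
    have := kerInner_self_nonneg hp f
    rw [Complex.le_def] at this
    exact this.1
  add_left := kerInner_add_left h
  smul_left f g r := kerInner_smul_left h r f g


/-- Aronszajn's realization theorem: `h` is positive semi-definite iff there is a Hilbert
space `E` and `F : Ω → E` with `h(λ, μ) = ⟨F λ, F μ⟩`. -/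
theorem stmt_9 {Ω : Type} (h : Ω → Ω → ℂ) :
    IsPSDKernel h ↔
      ∃ (E : Type) (_ : NormedAddCommGroup E) (_ : InnerProductSpace ℂ E)
        (_ : CompleteSpace E) (F : Ω → E),
        ∀ lam mu : Ω, h lam mu = inner ℂ (F mu) (F lam) := by
  constructor
  · intro hp
    letI c : PreInnerProductSpace.Core ℂ (Ω →₀ ℂ) := kerCore hp
    letI : SeminormedAddCommGroup (Ω →₀ ℂ) := @InnerProductSpace.Core.toSeminormedAddCommGroup ℂ _ _ _ _ c
    letI : NormedSpace ℂ (Ω →₀ ℂ) := InnerProductSpace.Core.toNormedSpace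
    letI : InnerProductSpace ℂ (Ω →₀ ℂ) :=
      { toInner := c.toInner
        norm_sq_eq_re_inner := fun x => by
          have hnorm : ‖x‖ = Real.sqrt (RCLike.re (c.inner x x)) := rfl
          rw [hnorm, Real.sq_sqrt (c.re_inner_nonneg x)]
        conj_inner_symm := c.conj_inner_symm
        add_left := c.add_left
        smul_left := c.smul_left }
    refine ⟨UniformSpace.Completion (SeparationQuotient (Ω →₀ ℂ)), inferInstance, inferInstance,
      inferInstance, fun l => ((SeparationQuotient.mk (Finsupp.single l (1:ℂ))) : _), fun lam mu => ?_⟩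
    rw [UniformSpace.Completion.inner_coe, SeparationQuotient.inner_mk_mk]
    exact (kerInner_single h lam mu).symm
  · rintro ⟨E, _, _, _, F, hF⟩ n s c
    have key : (∑ i, ∑ j, h (s i) (s j) * c i * (starRingEnd ℂ) (c j)) =
        inner ℂ (∑ j, c j • F (s j)) (∑ i, c i • F (s i)) := by
      rw [sum_inner, Finset.sum_comm]
      refine Finset.sum_congr rfl fun j _ => ?_
      rw [inner_sum]
      refine Finset.sum_congr rfl fun i _ => ?_
      rw [inner_smul_left, inner_smul_right, ← hF (s i) (s j)]
      ring
    rw [key, Complex.le_def]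
    refine ⟨?_, ?_⟩
    · simpa using inner_self_nonneg (𝕜 := ℂ) (x := ∑ i, c i • F (s i))
    · exact (inner_self_im (𝕜 := ℂ) (∑ i, c i • F (s i))).symm
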